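/- Let A ⊆ ℤ be infinite and a, x, y positive integers. For t ∈ ℤ let I(t) = {t+1, ..., t+x}. Suppose for every t ∈ ℤ, either |A ∩ I(t)| ≤ a, or |A ∩ I(t)| + |A ∩ I(t+y)| ≤ 2a. Then the upper density of A is at most a/x. -/

import Mathlib

open Filter Set

/-- The translateSet `S + t` of a set of integers. -/
def translateSet (S : Set ℤ) (t : ℤ) : Set ℤ := (· + t) '' S

/-- Upper density of a set of integers. -/
noncomputable def upperDensity (A : Set ℤ) : ℝ :=
  Filter.limsup (fun n : ℕ => ((A ∩ Set.Icc (-(n : ℤ)) (n : ℤ)).ncard : ℝ) / (2 * n + 1)) Filter.atTop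

/-- Lower density of a set of integers. -/
noncomputable def lowerDensity (A : Set ℤ) : ℝ :=
  Filter.liminf (fun n : ℕ => ((A ∩ Set.Icc (-(n : ℤ)) (n : ℤ)).ncard : ℝ) / (2 * n + 1)) Filter.atTop

/-- `A` is `S`-covering: every integer lies in some translateSet `S + a`, `a ∈ A`. -/
def SCovering (S A : Set ℤ) : Prop := ∀ t : ℤ, ∃ a ∈ A, t ∈ translateSet S a

/-- `A` is `S`-blocking: `A` meets every translateSet of `S`. -/
def SBlocking (S A : Set ℤ) : Prop := ∀ t : ℤ, (A ∩ translateSet S t).Nonempty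

/-- `A` is `S`-free: `A` contains no translateSet of `S`. -/
def SFree (S A : Set ℤ) : Prop := ∀ t : ℤ, ¬ translateSet S t ⊆ A

/-- `A` is `S`-packing: distinct translates `S + a₁`, `S + a₂` with `a₁, a₂ ∈ A` are disjoint. -/
def SPacking (S A : Set ℤ) : Prop :=
  ∀ a₁ ∈ A, ∀ a₂ ∈ A, a₁ ≠ a₂ → Disjoint (translateSet S a₁) (translateSet S a₂)

/-- Maximum packing density of `S`. -/
noncomputable def dP (S : Set ℤ) : ℝ := sSup (upperDensity '' {A | SPacking S A})

/-- Minimum covering density of `S`. -/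
noncomputable def dC (S : Set ℤ) : ℝ := sInf (lowerDensity '' {A | SCovering S A})

/-- Minimum blocking density of `S`. -/
noncomputable def dB (S : Set ℤ) : ℝ := sInf (lowerDensity '' {A | SBlocking S A})

/-- `d_f(S)`: supremum of upper densities of `S`-free sets. -/
noncomputable def dF (S : Set ℤ) : ℝ := sSup (upperDensity '' {A | SFree S A})

/-- `d_f(S, -S)`: supremum of upper densities of sets free of translates of both `S` and `-S`. -/
noncomputable def dF2 (S : Set ℤ) : ℝ := sSup (upperDensity '' {A | SFree S A ∧ SFree (-S) A})


open Classical in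
noncomputable def Fc (A : Set ℤ) (x : ℕ) (t : ℤ) : ℕ :=
  ((Finset.Icc (t+1) (t+x)).filter (· ∈ A)).card

lemma ncard_eq_Fc (A : Set ℤ) (x : ℕ) (t : ℤ) :
    (A ∩ Set.Icc (t+1) (t+x)).ncard = Fc A x t := by
  classical
  rw [Fc, ← Set.ncard_coe_finset]
  congr 1
  ext s
  simp [Set.mem_Icc]; tauto

lemma sum_bound (A : Set ℤ) (a x y : ℕ) (hy : 0 < y)
    (h : ∀ t : ℤ, Fc A x t ≤ a ∨ Fc A x t + Fc A x (t + y) ≤ 2 * a)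
    (lo hi : ℤ) :
    ∑ t ∈ Finset.Icc lo hi, Fc A x t ≤ a * (Finset.Icc lo hi).card + a * y := by
  classical
  set T := Finset.Icc lo hi with hT
  set Bad := T.filter (fun t => a < Fc A x t) with hBadDef
  set Good := T.filter (fun t => ¬ a < Fc A x t) with hGoodDef
  set Bad' := Bad.filter (fun t => t + (y:ℤ) ∈ T) with hBad'Def
  set img := Bad'.image (fun t => t + (y:ℤ)) with himgDef
  have hpair : ∀ t ∈ Bad, Fc A x t + Fc A x (t + y) ≤ 2 * a := by
    intro t ht
    rw [hBadDef, Finset.mem_filter] at ht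
    rcases h t with h1 | h2
    · omega
    · exact h2
  have himgGood : img ⊆ Good := by
    intro u hu
    rw [himgDef, Finset.mem_image] at hu
    obtain ⟨t, ht, rfl⟩ := hu
    rw [hBad'Def, Finset.mem_filter] at ht
    have h2 := hpair t ht.1
    have h3 := ht.1
    rw [hBadDef, Finset.mem_filter] at h3
    rw [hGoodDef, Finset.mem_filter]
    exact ⟨ht.2, by omega⟩
  have hinj : Set.InjOn (fun t => t + (y:ℤ)) Bad' := fun p _ q _ hpq => by simpa using hpq
  have himgcard : img.card = Bad'.card := Finset.card_image_of_injOn hinj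
  have hsplit : ∑ t ∈ Bad, Fc A x t + ∑ t ∈ Good, Fc A x t = ∑ t ∈ T, Fc A x t :=
    Finset.sum_filter_add_sum_filter_not T _ _
  have hcards : Bad.card + Good.card = T.card :=
    Finset.card_filter_add_card_filter_not _
  have h2 : ∑ t ∈ Bad, Fc A x t + ∑ t ∈ Bad, Fc A x (t + y) ≤ 2 * a * Bad.card := by
    rw [← Finset.sum_add_distrib]
    calc ∑ t ∈ Bad, (Fc A x t + Fc A x (t + y)) ≤ ∑ _t ∈ Bad, 2 * a :=
          Finset.sum_le_sum hpair
      _ = 2 * a * Bad.card := by rw [Finset.sum_const]; ring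
  have h3 : ∑ u ∈ img, Fc A x u ≤ ∑ t ∈ Bad, Fc A x (t + y) := by
    rw [himgDef, Finset.sum_image hinj]
    exact Finset.sum_le_sum_of_subset (Finset.filter_subset _ _)
  have h4 : ∑ t ∈ Good \ img, Fc A x t + ∑ u ∈ img, Fc A x u = ∑ t ∈ Good, Fc A x t :=
    Finset.sum_sdiff himgGood
  have h5 : ∑ t ∈ Good \ img, Fc A x t ≤ a * (Good \ img).card := by
    rw [mul_comm]
    apply Finset.sum_le_card_nsmul
    intro t ht
    have := (Finset.mem_sdiff.mp ht).1
    rw [hGoodDef, Finset.mem_filter] at this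
    omega
  have h6 : (Good \ img).card + img.card = Good.card := Finset.card_sdiff_add_card_eq_card himgGood
  have h7 : Bad.card ≤ Bad'.card + y := by
    have hsub : Bad \ Bad' ⊆ Finset.Icc (hi - y + 1) hi := by
      intro t ht
      rw [Finset.mem_sdiff] at ht
      obtain ⟨htB, htB'⟩ := ht
      have h8 : t ∈ T := (Finset.mem_filter.mp htB).1
      rw [hT, Finset.mem_Icc] at h8
      have h9 : ¬ (t + (y:ℤ) ∈ T) := fun hc => htB' (Finset.mem_filter.mpr ⟨htB, hc⟩)
      rw [hT, Finset.mem_Icc] at h9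
      rw [Finset.mem_Icc]
      omega
    have h10 : (Bad \ Bad').card ≤ y := by
      calc (Bad \ Bad').card ≤ (Finset.Icc (hi - y + 1) hi).card := Finset.card_le_card hsub
        _ = y := by rw [Int.card_Icc]; omega
    have h11 : (Bad \ Bad').card + Bad'.card = Bad.card :=
      Finset.card_sdiff_add_card_eq_card (Finset.filter_subset (fun t => t + (y:ℤ) ∈ T) Bad)
    omega
  zify at hsplit h2 h3 h4 h5 h6 h7 hcards ⊢
  have e6 : (a:ℤ) * (Good \ img).card + a * img.card = a * Good.card := by
    rw [← mul_add, h6]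
  have e7 : (a:ℤ) * Bad.card ≤ a * Bad'.card + a * y := by
    rw [← mul_add]; exact mul_le_mul_of_nonneg_left h7 (by positivity)
  have eC : (a:ℤ) * Bad.card + a * Good.card = a * T.card := by rw [← mul_add, hcards]
  rw [himgcard] at e6
  nlinarith [h2, h3, h4, h5, hsplit]

lemma count_bound (A : Set ℤ) (x : ℕ) (n : ℕ) :
    x * (A ∩ Set.Icc (-(n:ℤ)) n).ncard ≤
      ∑ t ∈ Finset.Icc (-(n:ℤ) - x) ((n:ℤ) - 1), Fc A x t := by
  classical
  set T := Finset.Icc (-(n:ℤ) - x) ((n:ℤ) - 1) with hT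
  set WA := (Finset.Icc (-(n:ℤ)) (n:ℤ)).filter (· ∈ A) with hWA
  have hnc : (A ∩ Set.Icc (-(n:ℤ)) n).ncard = WA.card := by
    rw [hWA, ← Set.ncard_coe_finset]
    congr 1
    ext s
    simp [Set.mem_Icc]; tauto
  rw [hnc]
  have step1 : ∀ t ∈ T, (WA.filter (fun s => s ∈ Finset.Icc (t+1) (t+(x:ℤ)))).card ≤ Fc A x t := by
    intro t _
    rw [Fc]
    apply Finset.card_le_card
    intro s hs
    rw [Finset.mem_filter] at hs ⊢
    rw [hWA, Finset.mem_filter] at hs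
    exact ⟨hs.2, hs.1.2⟩
  calc x * WA.card = ∑ s ∈ WA, x := by rw [Finset.sum_const]; ring
    _ = ∑ s ∈ WA, (T.filter (fun t => s ∈ Finset.Icc (t+1) (t+(x:ℤ)))).card := by
        apply Finset.sum_congr rfl
        intro s hs
        rw [hWA, Finset.mem_filter, Finset.mem_Icc] at hs
        have : T.filter (fun t => s ∈ Finset.Icc (t+1) (t+(x:ℤ))) = Finset.Icc (s - x) (s - 1) := by
          ext t
          rw [Finset.mem_filter, hT, Finset.mem_Icc, Finset.mem_Icc, Finset.mem_Icc]
          omega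
        rw [this, Int.card_Icc]
        omega
    _ = ∑ s ∈ WA, ∑ t ∈ T, (if s ∈ Finset.Icc (t+1) (t+(x:ℤ)) then 1 else 0) := by
        apply Finset.sum_congr rfl
        intro s _
        rw [Finset.card_filter]
    _ = ∑ t ∈ T, ∑ s ∈ WA, (if s ∈ Finset.Icc (t+1) (t+(x:ℤ)) then 1 else 0) := Finset.sum_comm
    _ = ∑ t ∈ T, (WA.filter (fun s => s ∈ Finset.Icc (t+1) (t+(x:ℤ)))).card := by
        apply Finset.sum_congr rfl
        intro t _
        rw [Finset.card_filter]
    _ ≤ ∑ t ∈ T, Fc A x t := Finset.sum_le_sum step1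

theorem stmt5 (A : Set ℤ) (hA : A.Infinite) (a x y : ℕ)
    (ha : 0 < a) (hx : 0 < x) (hy : 0 < y)
    (h : ∀ t : ℤ,
      (A ∩ Set.Icc (t + 1) (t + x)).ncard ≤ a ∨
      (A ∩ Set.Icc (t + 1) (t + x)).ncard + (A ∩ Set.Icc (t + y + 1) (t + y + x)).ncard ≤ 2 * a) :
    upperDensity A ≤ (a : ℝ) / x := by
  classical
  have hF : ∀ t : ℤ, Fc A x t ≤ a ∨ Fc A x t + Fc A x (t + y) ≤ 2 * a := by
    intro t
    have ht := h t
    rwa [ncard_eq_Fc, ncard_eq_Fc A x (t + y)] at ht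
  have keyN : ∀ n : ℕ, x * (A ∩ Set.Icc (-(n:ℤ)) n).ncard ≤ a * (2 * n + x) + a * y := by
    intro n
    refine (count_bound A x n).trans ?_
    have hb := sum_bound A a x y hy hF (-(n:ℤ) - x) ((n:ℤ) - 1)
    have hc : (Finset.Icc (-(n:ℤ) - x) ((n:ℤ) - 1)).card = 2 * n + x := by
      rw [Int.card_Icc]; omega
    rw [hc] at hb
    exact hb
  set f : ℕ → ℝ :=
    fun n : ℕ => ((A ∩ Set.Icc (-(n : ℤ)) (n : ℤ)).ncard : ℝ) / (2 * n + 1) with hfdef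
  have hf0 : ∀ n, 0 ≤ f n := by
    intro n
    apply div_nonneg (by positivity) (by positivity)
  have key : ∀ n : ℕ, f n ≤ ((a:ℝ) * (2*n + x) + a*y) / (x * (2*n+1)) := by
    intro n
    have h1 : (0:ℝ) < x := by exact_mod_cast hx
    have h2 : (0:ℝ) < 2*(n:ℝ)+1 := by positivity
    rw [hfdef, div_le_div_iff₀ h2 (by positivity)]
    have hk : ((x:ℝ)) * ((A ∩ Set.Icc (-(n:ℤ)) n).ncard : ℝ) ≤ (a:ℝ) * (2*n + x) + a*y := by
      exact_mod_cast keyN n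
    nlinarith [hk, (Nat.cast_nonneg (A ∩ Set.Icc (-(n:ℤ)) (n:ℤ)).ncard : (0:ℝ) ≤ _)]
  set g : ℕ → ℝ := fun n => (a:ℝ)/x + ((a:ℝ)*(x + y - 1)/x) * (1/(2*(n:ℝ)+1)) with hg
  have hfg : ∀ n, f n ≤ g n := by
    intro n
    refine (key n).trans (le_of_eq ?_)
    have h1 : (0:ℝ) < x := by exact_mod_cast hx
    have h2 : (0:ℝ) < 2*(n:ℝ)+1 := by positivity
    simp only [hg]
    field_simp
    ring
  have htend : Tendsto g atTop (nhds ((a:ℝ)/x)) := by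
    have h0 : Tendsto (fun n : ℕ => 1/(2*(n:ℝ)+1)) atTop (nhds 0) := by
      simp only [one_div]
      apply Tendsto.comp tendsto_inv_atTop_zero
      apply Filter.tendsto_atTop_add_const_right
      exact (tendsto_natCast_atTop_atTop (R := ℝ)).const_mul_atTop (by norm_num)
    have := ((h0.const_mul ((a:ℝ)*(x + y - 1)/x)).const_add ((a:ℝ)/x))
    simpa [hg] using this
  calc upperDensity A = Filter.limsup f Filter.atTop := rfl
    _ ≤ Filter.limsup g Filter.atTop :=
        Filter.limsup_le_limsup (Filter.Eventually.of_forall hfg)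
          ((Filter.isBoundedUnder_of ⟨0, hf0⟩).isCoboundedUnder_le)
          htend.isBoundedUnder_le
    _ = (a:ℝ)/x := htend.limsup_eq
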